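/- Let V be a finite set, let x assign a nonnegative real x^r_{(u,v)} to each r ∈ V and each ordered pair (u,v) of distinct vertices, and let W ⊆ V with |W| ≥ 2 maximize density_x(W) among all subsets of V of size at least 2. Then for every partition π of W into nonempty parts, x(E[W]) − ∑_{U∈π} x(E[U]) ≥ density_x(W)·(|π| − 1). -/
import Mathlib


open Finset

noncomputable section

variable {V : Type*}

/-- The set of terminals: vertices occurring in some pair of `P`. -/
def terminals [Fintype V] [DecidableEq V] (P : Finset (Finset V)) : Finset V :=
  Finset.univ.filter fun v => ∃ p ∈ P, v ∈ p

/-- Feasibility for the Forest-BCR linear program: `x r u v` is the value of the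
variable `x^r_{(u,v)}` and `z r p` is the value of `z^r_P`. -/
def ForestBCRFeasible [Fintype V] [DecidableEq V] (P : Finset (Finset V))
    (x : V → V → V → ℝ) (z : V → Finset V → ℝ) : Prop :=
  (∀ r u v : V, u ≠ v → 0 ≤ x r u v) ∧
  (∀ r : V, ∀ p ∈ P, 0 ≤ z r p) ∧
  (∀ p ∈ P, ∑ r : V, z r p = 1) ∧
  (∀ r : V, ∀ p ∈ P, ∀ U : Finset V, r ∉ U → (p ∩ U).Nonempty →
    z r p ≤ ∑ u ∈ U, ∑ v ∈ Uᶜ, x r u v)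

/-- The cost `c(x)` of a Forest-BCR solution. -/
def bcrCost [Fintype V] [DecidableEq V] (c : V → V → ℝ) (x : V → V → V → ℝ) : ℝ :=
  ∑ r : V, ∑ u : V, ∑ v ∈ Finset.univ.erase u, c u v * x r u v

/-- Half-integrality of a Forest-BCR solution. -/
def HalfIntegralSol [Fintype V] [DecidableEq V] (P : Finset (Finset V))
    (x : V → V → V → ℝ) (z : V → Finset V → ℝ) : Prop :=
  (∀ r u v : V, u ≠ v → ∃ n : ℤ, x r u v = n / 2) ∧
  (∀ r : V, ∀ p ∈ P, ∃ n : ℤ, z r p = n / 2)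

/-- The solution `x` is supported on the graph `G`. -/
def SupportedOn (G : SimpleGraph V) (x : V → V → V → ℝ) : Prop :=
  ∀ r u v : V, u ≠ v → ¬ G.Adj u v → x r u v = 0

/-- Total `x`-value `x(E[W])` of directed edges with both endpoints in `W`. -/
def xEdges [Fintype V] [DecidableEq V] (x : V → V → V → ℝ) (W : Finset V) : ℝ :=
  ∑ r : V, ∑ u ∈ W, ∑ v ∈ W.erase u, x r u v

/-- The density of `W` with respect to `x`: `x(E[W]) / (|W| − 1)`. -/
def densityX [Fintype V] [DecidableEq V] (x : V → V → V → ℝ) (W : Finset V) : ℝ :=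
  xEdges x W / ((W.card : ℝ) - 1)

/-- If `W` (of size at least `2`) maximizes the density with respect to
`x`, then for every partition `π` of `W` into nonempty parts,
`x(E[W]) − ∑_{U ∈ π} x(E[U]) ≥ density_x(W) · (|π| − 1)`. -/
theorem densest_subgraph_partition_inequality {V : Type*} [Fintype V] [DecidableEq V]
    (x : V → V → V → ℝ) (hx : ∀ r u v : V, u ≠ v → 0 ≤ x r u v)
    (W : Finset V) (hW : 2 ≤ W.card)
    (hmax : ∀ W' : Finset V, 2 ≤ W'.card → densityX x W' ≤ densityX x W)
    (π : Finset (Finset V))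
    (hne : ∀ U ∈ π, U.Nonempty)
    (hdisj : ∀ A ∈ π, ∀ B ∈ π, A ≠ B → Disjoint A B)
    (hcover : π.biUnion id = W) :
    densityX x W * ((π.card : ℝ) - 1) ≤ xEdges x W - ∑ U ∈ π, xEdges x U := by
  have hWpos : (0:ℝ) < (W.card : ℝ) - 1 := by
    have : (2:ℝ) ≤ (W.card : ℝ) := by exact_mod_cast hW
    linarith
  have hxE : ∀ S : Finset V, 0 ≤ xEdges x S := fun S =>
    Finset.sum_nonneg fun r _ => Finset.sum_nonneg fun u _ =>
      Finset.sum_nonneg fun v hv => hx r u v (Finset.ne_of_mem_erase hv).symm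
  set d := densityX x W with hd
  have hdW : xEdges x W = d * ((W.card : ℝ) - 1) := by
    rw [hd, densityX, div_mul_cancel₀ _ (ne_of_gt hWpos)]
  have hd0 : 0 ≤ d := div_nonneg (hxE W) hWpos.le
  have hU : ∀ U ∈ π, xEdges x U ≤ d * ((U.card : ℝ) - 1) := by
    intro U hUπ
    rcases le_or_gt 2 U.card with h2 | h2
    · have hUpos : (0:ℝ) < (U.card : ℝ) - 1 := by
        have : (2:ℝ) ≤ (U.card : ℝ) := by exact_mod_cast h2
        linarith
      have := hmax U h2
      rw [densityX, div_le_iff₀ hUpos] at this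
      exact this
    · have h1 : U.card = 1 := by
        have := (hne U hUπ).card_pos
        omega
      obtain ⟨a, rfl⟩ := Finset.card_eq_one.mp h1
      simp [xEdges, h1]
  have hc : ∑ U ∈ π, U.card = W.card := by
    rw [← hcover]; exact (Finset.card_biUnion hdisj).symm
  have hcard : ∑ U ∈ π, (U.card : ℝ) = (W.card : ℝ) := by
    rw [← hc]; push_cast; rfl
  have hsum : ∑ U ∈ π, xEdges x U ≤ d * ((W.card : ℝ) - (π.card : ℝ)) := by
    calc ∑ U ∈ π, xEdges x U ≤ ∑ U ∈ π, d * ((U.card : ℝ) - 1) :=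
          Finset.sum_le_sum hU
      _ = d * ((W.card : ℝ) - (π.card : ℝ)) := by
          rw [← Finset.mul_sum, Finset.sum_sub_distrib, hcard]
          simp
  have := hdW
  nlinarith [hsum]
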